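/- Let (α_{ij}) be a real symmetric 3×3 matrix and let (β_{ijk}) be a totally symmetric 3-tensor on ℝ³. Define R_{ijkl} = α_{ik}α_{jl} − α_{il}α_{jk} and S_{ijklm} = β_{ikm}α_{jl} + α_{ik}β_{jlm} − β_{ilm}α_{jk} − α_{il}β_{jkm}. Then r₁ := (R_{1213}R_{2323} − R_{1223}R_{1323})S_{12121} − (R_{1213}R_{1323} − R_{1223}R_{1313})S_{12122} − (R_{1212}R_{2323} − R_{1223}²)S_{12131} + (R_{1212}R_{1323} − R_{1213}R_{1223})S_{12132} + (R_{1212}R_{1323} − R_{1213}R_{1223})S_{12231} − (R_{1212}R_{1313} − R_{1213}²)S_{12232} = 0. -/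
import Mathlib


open Matrix

theorem rivertz_r1_vanishes (A : Matrix (Fin 3) (Fin 3) ℝ) (hA : A.IsSymm)
    (β : Fin 3 → Fin 3 → Fin 3 → ℝ)
    (hβ1 : ∀ i j k, β i j k = β j i k)
    (hβ2 : ∀ i j k, β i j k = β i k j)
    (R : Fin 3 → Fin 3 → Fin 3 → Fin 3 → ℝ)
    (hR : ∀ i j k l, R i j k l = A i k * A j l - A i l * A j k)
    (S : Fin 3 → Fin 3 → Fin 3 → Fin 3 → Fin 3 → ℝ)
    (hS : ∀ i j k l m, S i j k l m =
      β i k m * A j l + A i k * β j l m - β i l m * A j k - A i l * β j k m) :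
    (R 0 1 0 2 * R 1 2 1 2 - R 0 1 1 2 * R 0 2 1 2) * S 0 1 0 1 0
    - (R 0 1 0 2 * R 0 2 1 2 - R 0 1 1 2 * R 0 2 0 2) * S 0 1 0 1 1
    - (R 0 1 0 1 * R 1 2 1 2 - R 0 1 1 2 ^ 2) * S 0 1 0 2 0
    + (R 0 1 0 1 * R 0 2 1 2 - R 0 1 0 2 * R 0 1 1 2) * S 0 1 0 2 1
    + (R 0 1 0 1 * R 0 2 1 2 - R 0 1 0 2 * R 0 1 1 2) * S 0 1 1 2 0
    - (R 0 1 0 1 * R 0 2 0 2 - R 0 1 0 2 ^ 2) * S 0 1 1 2 1 = 0 := by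
  have hAs : ∀ i j, A j i = A i j := fun i j => hA.apply i j
  simp only [hR, hS]
  rw [hAs 0 1, hAs 0 2, hAs 1 2,
    show β 1 1 0 = β 0 1 1 by rw [hβ1 1 1 0, hβ2 1 1 0, hβ1 1 0 1],
    show β 1 0 0 = β 0 0 1 by rw [hβ1 1 0 0, hβ2 0 1 0],
    show β 0 1 0 = β 0 0 1 from hβ2 0 1 0,
    show β 1 0 1 = β 0 1 1 from hβ1 1 0 1,
    show (β 1 2 0 : ℝ) = β 0 1 2 by rw [hβ2 1 2 0, hβ1 1 0 2, hβ2 0 1 2],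
    show β 0 2 0 = β 0 0 2 from hβ2 0 2 0,
    show β 0 2 1 = β 0 1 2 from hβ2 0 2 1,
    show β 1 2 1 = β 1 1 2 from hβ2 1 2 1]
  ring
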